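/- Let d ≥ 2 be an integer and let (A_m)_{m≥0} be a formal orbit portrait of valence N ≥ 2 with constant degrees d_m = d for all m. Let ε ∈ (0,1) and m ≥ 0, and suppose every complementary arc of A_{m+1} has length at least ε. Then no complementary arc of A_m has length ℓ satisfying k/d < ℓ < (k + ε)/d for some integer k with 1 ≤ k ≤ d − 1. -/

import Mathlib

/-- The unique representative in `[0,1)` of `b - a`; for `a ≠ b` this is the
unique representative of `b − a` in `(0,1)`, the length `ℓ(a,b)` of the arc from `a` to `b`. -/
noncomputable def arcLen (a b : UnitAddCircle) : ℝ :=
  ((AddCircle.equivIco 1 0) (b - a) : ℝ)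

/-- The open arc `(a,b) = {a + t : 0 < t < ℓ(a,b)}` in `ℝ/ℤ`. -/
def openArc (a b : UnitAddCircle) : Set UnitAddCircle :=
  {x | ∃ t : ℝ, 0 < t ∧ t < arcLen a b ∧ x = a + (t : UnitAddCircle)}

/-- `(a,b,c)` is in positive cyclic order: `ℓ(a,b) < ℓ(a,c)`. -/
def PosCyclic (a b c : UnitAddCircle) : Prop := arcLen a b < arcLen a c

/-- A formal orbit portrait of valence `N` with degrees `d`: a sequence of
`N`-element subsets `A m` of `ℝ/ℤ` such that `θ ↦ d_{m+1}·θ` maps `A m`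
bijectively onto `A (m+1)` and carries every triple of pairwise distinct points
of `A m` in positive cyclic order to a triple in positive cyclic order. -/
def IsFormalPortrait (N : ℕ) (d : ℕ → ℕ) (A : ℕ → Set UnitAddCircle) : Prop :=
  ∀ m : ℕ,
    (A m).Finite ∧ (A m).ncard = N ∧
    Set.BijOn (fun θ => d (m + 1) • θ) (A m) (A (m + 1)) ∧
    ∀ a ∈ A m, ∀ b ∈ A m, ∀ c ∈ A m, a ≠ b → a ≠ c → b ≠ c →
      PosCyclic a b c →
        PosCyclic (d (m + 1) • a) (d (m + 1) • b) (d (m + 1) • c)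

/-- `(a,b)` is a complementary arc of `A`: `a, b ∈ A`, `a ≠ b`, and the open
arc `(a,b)` contains no point of `A`. -/
def IsComplArc (A : Set UnitAddCircle) (a b : UnitAddCircle) : Prop :=
  a ≠ b ∧ a ∈ A ∧ b ∈ A ∧ openArc a b ∩ A = ∅

lemma coe_arcLen (a b : UnitAddCircle) : ((arcLen a b : ℝ) : UnitAddCircle) = b - a :=
  (AddCircle.equivIco 1 0).symm_apply_apply (b - a)

lemma arcLen_mem (a b : UnitAddCircle) : arcLen a b ∈ Set.Ico (0:ℝ) 1 := by
  have := ((AddCircle.equivIco 1 0) (b - a)).2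
  simpa [arcLen] using this

lemma arcLen_coe (x : ℝ) (a : UnitAddCircle) : arcLen a (a + ↑x) = Int.fract x := by
  unfold arcLen
  rw [add_sub_cancel_left]
  simpa using AddCircle.coe_equivIco_mk_apply (p := (1:ℝ)) x

lemma arcLen_eq_zero_iff (a b : UnitAddCircle) : arcLen a b = 0 ↔ a = b := by
  constructor
  · intro h
    have h2 := coe_arcLen a b
    rw [h] at h2
    have h3 : b - a = 0 := by simpa using h2.symm
    exact (sub_eq_zero.mp h3).symm
  · intro h; subst h
    have : arcLen a a = Int.fract (0:ℝ) := by simpa using arcLen_coe 0 a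
    simpa using this

lemma arcLen_inj (a b c : UnitAddCircle) (h : arcLen a b = arcLen a c) : b = c := by
  have h1 := coe_arcLen a b
  have h2 := coe_arcLen a c
  rw [h] at h1
  exact sub_left_injective.eq_iff.mp (h1.symm.trans h2)

lemma mem_openArc_iff (a b c : UnitAddCircle) :
    c ∈ openArc a b ↔ 0 < arcLen a c ∧ arcLen a c < arcLen a b := by
  constructor
  · rintro ⟨t, ht0, htl, rfl⟩
    have hb1 : arcLen a b < 1 := (arcLen_mem a b).2
    have ht : arcLen a (a + ↑t) = Int.fract t := arcLen_coe t a
    rw [ht, Int.fract_eq_self.mpr ⟨ht0.le, htl.trans hb1⟩]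
    exact ⟨ht0, htl⟩
  · rintro ⟨h0, hl⟩
    refine ⟨arcLen a c, h0, hl, ?_⟩
    rw [coe_arcLen]
    abel

lemma arcLen_nsmul (n : ℕ) (a b : UnitAddCircle) :
    arcLen (n • a) (n • b) = Int.fract (n * arcLen a b) := by
  have h : n • b = n • a + ((n * arcLen a b : ℝ) : UnitAddCircle) := by
    rw [eq_comm, add_comm, ← eq_sub_iff_add_eq, ← smul_sub, ← coe_arcLen a b]
    rw [← nsmul_eq_mul]
    norm_cast
  rw [h, arcLen_coe]

/-- Constant degree `d`: if every complementary arc of `A (m+1)` has length at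
least `ε`, then no complementary arc of `A m` has length `ℓ` with
`k/d < ℓ < (k + ε)/d` for some integer `1 ≤ k ≤ d − 1`. -/
theorem no_arc_length_in_forbidden_interval (dd : ℕ) (hdd : 2 ≤ dd) (N : ℕ) (hN : 2 ≤ N)
    (A : ℕ → Set UnitAddCircle) (hA : IsFormalPortrait N (fun _ => dd) A)
    (ε : ℝ) (hε0 : 0 < ε) (hε1 : ε < 1) (m : ℕ)
    (h : ∀ a b : UnitAddCircle, IsComplArc (A (m + 1)) a b → ε ≤ arcLen a b) :
    ∀ a b : UnitAddCircle, IsComplArc (A m) a b →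
      ∀ k : ℕ, 1 ≤ k → k ≤ dd - 1 →
        ¬((k : ℝ) / dd < arcLen a b ∧ arcLen a b < ((k : ℝ) + ε) / dd) := by
  intro a b hab k hk1 hk2 hcon
  obtain ⟨h1, h2⟩ := hcon
  obtain ⟨hne, haA, hbA, hempty⟩ := hab
  obtain ⟨-, -, hbij, hmono⟩ := hA m
  set ℓ := arcLen a b with hℓdef
  have hd0 : (0:ℝ) < dd := by positivity
  have hk_lt : (k:ℝ) < dd * ℓ := by
    rw [div_lt_iff₀ hd0] at h1; linarith
  have hlt : dd * ℓ < k + ε := by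
    rw [lt_div_iff₀ hd0] at h2; linarith
  have hfloor : ⌊(dd:ℝ) * ℓ⌋ = (k:ℤ) := by
    rw [Int.floor_eq_iff]
    constructor
    · push_cast; linarith
    · push_cast; linarith
  have hfract : Int.fract ((dd:ℝ) * ℓ) = dd * ℓ - k := by
    rw [Int.fract, hfloor]; push_cast; ring
  have hlen : arcLen (dd • a) (dd • b) = dd * ℓ - k := by
    rw [arcLen_nsmul]; exact hfract
  have hpos : 0 < arcLen (dd • a) (dd • b) := by rw [hlen]; linarith
  have hsm : arcLen (dd • a) (dd • b) < ε := by rw [hlen]; linarith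
  have hda : dd • a ∈ A (m + 1) := hbij.mapsTo haA
  have hdb : dd • b ∈ A (m + 1) := hbij.mapsTo hbA
  have hdne : dd • a ≠ dd • b := by
    intro he
    rw [(arcLen_eq_zero_iff _ _).mpr he] at hpos
    exact lt_irrefl _ hpos
  have hcompl : IsComplArc (A (m + 1)) (dd • a) (dd • b) := by
    refine ⟨hdne, hda, hdb, ?_⟩
    ext x
    simp only [Set.mem_inter_iff, Set.mem_empty_iff_false, iff_false, not_and]
    intro hx hxA
    obtain ⟨c, hcA, hcx⟩ := hbij.surjOn hxA
    have hcx' : dd • c = x := hcx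
    subst hcx'
    rw [mem_openArc_iff] at hx
    have hca : c ≠ a := by
      intro he; subst he
      rw [(arcLen_eq_zero_iff _ _).mpr rfl] at hx
      exact lt_irrefl _ hx.1
    have hcb : c ≠ b := by
      intro he; subst he
      exact lt_irrefl _ hx.2
    have hcnot : c ∉ openArc a b := by
      intro hc
      have : c ∈ openArc a b ∩ A m := ⟨hc, hcA⟩
      rw [hempty] at this
      exact this
    rw [mem_openArc_iff] at hcnot
    push_neg at hcnot
    have hac0 : 0 < arcLen a c := by
      rcases lt_or_eq_of_le (arcLen_mem a c).1 with h' | h'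
      · exact h'
      · exact absurd ((arcLen_eq_zero_iff a c).mp h'.symm).symm hca
    have hle : ℓ ≤ arcLen a c := hcnot hac0
    have hlne : ℓ ≠ arcLen a c := by
      intro he
      exact hcb (arcLen_inj a c b he.symm)
    have hposcyc : PosCyclic a b c := lt_of_le_of_ne hle hlne
    have := hmono a haA b hbA c hcA hne hca.symm (fun he => hcb he.symm) hposcyc
    exact absurd hx.2 (not_lt.mpr (le_of_lt this))
  have := h _ _ hcompl
  linarith
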